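/- Let 𝔽_q be a finite field and let W ∈ M₂(𝔽_q) be nonzero. Then there exists S ∈ M₂(𝔽_q) with tr(W·S) = 0 and det(S) ≠ 0. -/

import Mathlib

/-- Over any finite field `F`, for every nonzero `W ∈ M₂(F)` there exists an
invertible `S ∈ M₂(F)` with `tr(W·S) = 0`. -/
theorem exists_invertible_traceless_pairing
    (F : Type*) [Field F] [Fintype F]
    (W : Matrix (Fin 2) (Fin 2) F) (hW : W ≠ 0) :
    ∃ S : Matrix (Fin 2) (Fin 2) F, (W * S).trace = 0 ∧ S.det ≠ 0 := by
  by_cases ha : W 0 0 ≠ 0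
  · refine ⟨!![-(W 0 1 + W 1 0) / W 0 0, 1; 1, 0], ?_, ?_⟩
    · simp [Matrix.trace_fin_two, Matrix.mul_apply, Fin.sum_univ_two]
      field_simp
      ring
    · simp [Matrix.det_fin_two]
  by_cases hd : W 1 1 ≠ 0
  · refine ⟨!![0, 1; 1, -(W 0 1 + W 1 0) / W 1 1], ?_, ?_⟩
    · simp [Matrix.trace_fin_two, Matrix.mul_apply, Fin.sum_univ_two]
      field_simp
      ring
    · simp [Matrix.det_fin_two]
  · push_neg at ha hd
    refine ⟨1, ?_, by simp⟩
    simp [Matrix.trace_fin_two, ha, hd]
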